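/- Let T be an isometry of a nondegenerate space (V,B) over a field F of characteristic different from 2, with V ≠ 0, and let m ∈ F[X] be the minimal polynomial of T over F. Then m(0) ≠ 0, the identity m(0)·m(X) = X^{deg m}·m(1/X) holds (i.e. m(0)·m equals the reverse of the polynomial m), and T and T⁻¹ have the same minimal polynomial over F. -/

import Mathlib

/-- The group of isometries of a bilinear space `(V, B)`, as a subgroup of the
group of linear automorphisms of `V`. -/
def isometryGroup (F : Type*) [Field F] {V : Type*} [AddCommGroup V] [Module F V]
    (B : LinearMap.BilinForm F V) : Subgroup (V ≃ₗ[F] V) where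
  carrier := {T | ∀ u v : V, B (T u) (T v) = B u v}
  one_mem' := by intro u v; rfl
  mul_mem' := by
    intro a b ha hb u v
    have h1 : (a * b) u = a (b u) := rfl
    have h2 : (a * b) v = a (b v) := rfl
    rw [h1, h2, ha, hb]
  inv_mem' := by
    intro a ha u v
    have h := ha (a⁻¹ u) (a⁻¹ v)
    have h1 : a (a⁻¹ u) = u := a.apply_symm_apply u
    have h2 : a (a⁻¹ v) = v := a.apply_symm_apply v
    rw [h1, h2] at h
    exact h.symm


open Polynomial

/-- The minimal polynomial `m` of an isometry of a nonzero nondegenerate space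
satisfies `m(0) ≠ 0` and `m(0) · m(X) = X^(deg m) · m(1/X)` (i.e. `m(0) · m` is
the reverse of `m`); in other words `m` is self-dual.  Moreover `T` and `T⁻¹`
have the same minimal polynomial. -/
theorem minpoly_isometry_self_dual
    (F : Type*) [Field F] (hchar : ringChar F ≠ 2)
    (V : Type*) [AddCommGroup V] [Module F V] [FiniteDimensional F V] [Nontrivial V]
    (B : LinearMap.BilinForm F V) (hB : B.IsSymm ∨ B.IsAlt) (hnd : B.Nondegenerate)
    (T : V ≃ₗ[F] V) (hT : T ∈ isometryGroup F B)
    (m : Polynomial F) (hm : m = minpoly F ((T : V →ₗ[F] V) : Module.End F V)) :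
    m.eval 0 ≠ 0 ∧
    Polynomial.C (m.eval 0) * m = m.reverse ∧
    minpoly F ((T.symm : V →ₗ[F] V) : Module.End F V) = m := by

  classical
  set S : Module.End F V := ((T : V →ₗ[F] V) : Module.End F V) with hSdef
  set S' : Module.End F V := ((T.symm : V →ₗ[F] V) : Module.End F V) with hS'def
  have happ : ∀ v : V, S v = T v := fun v => rfl
  have happ' : ∀ v : V, S' v = T.symm v := fun v => rfl
  have hS'S : S' * S = 1 := by
    ext v; simp [Module.End.mul_apply, happ, happ']
  have hSS' : S * S' = 1 := by
    ext v; simp [Module.End.mul_apply, happ, happ']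
  have hc : Commute S' S := by
    unfold Commute SemiconjBy; rw [hS'S, hSS']
  -- single step adjointness
  have hstep : ∀ u v : V, B (S u) v = B u (S' v) := by
    intro u v
    have h := hT u (T.symm v)
    rw [T.apply_symm_apply] at h
    exact h
  have hstep' : ∀ u v : V, B (S' u) v = B u (S v) := by
    intro u v
    have h := hT (T.symm u) v
    rw [T.apply_symm_apply] at h
    exact h.symm
  have hpow : ∀ (k : ℕ) (u v : V), B ((S ^ k) u) v = B u ((S' ^ k) v) := by
    intro k
    induction k with
    | zero => intro u v; simp
    | succ k ih =>
      intro u v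
      rw [pow_succ, pow_succ', Module.End.mul_apply, Module.End.mul_apply,
        ih (S u) v, hstep]
  have hpow' : ∀ (k : ℕ) (u v : V), B ((S' ^ k) u) v = B u ((S ^ k) v) := by
    intro k
    induction k with
    | zero => intro u v; simp
    | succ k ih =>
      intro u v
      rw [pow_succ, pow_succ', Module.End.mul_apply, Module.End.mul_apply,
        ih (S' u) v, hstep']
  open Polynomial in
  have hadj : ∀ (p : Polynomial F) (u v : V),
      B ((aeval S p) u) v = B u ((aeval S' p) v) := by
    intro p
    induction p using Polynomial.induction_on' with
    | add p q hp hq =>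
      intro u v
      simp only [map_add, LinearMap.add_apply, map_add, LinearMap.BilinForm.add_left,
        LinearMap.BilinForm.add_right, hp u v, hq u v]
    | monomial n a =>
      intro u v
      simp only [aeval_monomial, Module.End.mul_apply, Module.algebraMap_end_apply,
        map_smul, LinearMap.smul_apply, smul_eq_mul]
      rw [hpow n u v]
  open Polynomial in
  have hadj' : ∀ (p : Polynomial F) (u v : V),
      B ((aeval S' p) u) v = B u ((aeval S p) v) := by
    intro p
    induction p using Polynomial.induction_on' with
    | add p q hp hq =>
      intro u v
      simp only [map_add, LinearMap.add_apply, map_add, LinearMap.BilinForm.add_left,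
        LinearMap.BilinForm.add_right, hp u v, hq u v]
    | monomial n a =>
      intro u v
      simp only [aeval_monomial, Module.End.mul_apply, Module.algebraMap_end_apply,
        map_smul, LinearMap.smul_apply, smul_eq_mul]
      rw [hpow' n u v]
  -- right nondegeneracy
  have hflip : ∀ w : V, (∀ u : V, B u w = 0) → w = 0 := by
    intro w hw
    refine hnd.1 w fun u => ?_
    rcases hB with hsym | halt
    · have h := hsym.eq w u
      rw [h]; exact hw u
    · have h := (LinearMap.IsAlt.neg halt u w).symm
      rw [hw u, neg_zero] at h
      exact h
  have hint : IsIntegral F S := IsIntegral.of_finite F S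
  have hint' : IsIntegral F S' := IsIntegral.of_finite F S'
  have h0 : Polynomial.aeval S m = 0 := by rw [hm]; exact minpoly.aeval F S
  have haS' : Polynomial.aeval S' m = 0 := by
    apply LinearMap.ext; intro v
    refine hflip _ fun u => ?_
    rw [← hadj m u v, h0]
    simp
  have haS : Polynomial.aeval S (minpoly F S') = 0 := by
    apply LinearMap.ext; intro v
    refine hflip _ fun u => ?_
    rw [← hadj' (minpoly F S') u v, minpoly.aeval F S']
    simp
  have hmono : m.Monic := by rw [hm]; exact minpoly.monic hint
  have hmono' : (minpoly F S').Monic := minpoly.monic hint'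
  have hdvd1 : minpoly F S' ∣ m := minpoly.dvd F S' haS'
  have hdvd2 : m ∣ minpoly F S' := by rw [hm]; exact minpoly.dvd F S haS
  have heqmin : minpoly F S' = m :=
    Polynomial.eq_of_monic_of_associated hmono' hmono (associated_of_dvd_dvd hdvd1 hdvd2)
  -- eval 0 ≠ 0
  have heval : m.eval 0 ≠ 0 := by
    intro h
    have hev : Module.End.HasEigenvalue S 0 := by
      rw [Module.End.hasEigenvalue_iff_isRoot, ← hm]
      exact h
    obtain ⟨v, hv⟩ := hev.exists_hasEigenvector
    have hv0 : T v = 0 := by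
      have := hv.apply_eq_smul
      simpa [happ] using this
    exact hv.2 (by simpa [hv0] using (T.symm_apply_apply v).symm)
  -- reflect computation
  have hrefl : ∀ (N : ℕ) (f : Polynomial F), f.natDegree ≤ N →
      Polynomial.aeval S' (f.reflect N) = S' ^ N * Polynomial.aeval S f := by
    intro N
    refine Polynomial.induction_with_natDegree_le
      (fun f => Polynomial.aeval S' (f.reflect N) = S' ^ N * Polynomial.aeval S f) N ?_ ?_ ?_
    · simp
    · intro n r _ hn
      have hcan : S' ^ N * S ^ n = S' ^ (N - n) := by
        conv_lhs => rw [← Nat.sub_add_cancel hn]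
        rw [pow_add, mul_assoc, ← hc.mul_pow, hS'S, one_pow, mul_one]
      rw [Polynomial.reflect_C_mul_X_pow, Polynomial.revAt_le hn]
      rw [map_mul, map_mul, Polynomial.aeval_C, Polynomial.aeval_C,
        Polynomial.aeval_X_pow, Polynomial.aeval_X_pow]
      rw [← mul_assoc, ← Algebra.commutes r (S' ^ N), mul_assoc, hcan]
    · intro f g _ _ hf hg
      rw [Polynomial.reflect_add, map_add, map_add, mul_add, hf, hg]
  have hrev0 : Polynomial.aeval S' m.reverse = 0 := by
    have : m.reverse = m.reflect m.natDegree := rfl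
    rw [this, hrefl m.natDegree m le_rfl, h0, mul_zero]
  have hdvdrev : m ∣ m.reverse := by
    have h := minpoly.dvd F S' hrev0
    rwa [heqmin] at h
  have hm0 : m ≠ 0 := hmono.ne_zero
  obtain ⟨q, hq⟩ := hdvdrev
  have hrevne : m.reverse ≠ 0 := fun h => hm0 (Polynomial.reverse_eq_zero.mp h)
  have hqne : q ≠ 0 := by
    rintro rfl
    rw [mul_zero] at hq
    exact hrevne hq
  have hdegq : q.natDegree = 0 := by
    have h1 : m.reverse.natDegree = m.natDegree + q.natDegree := by
      rw [hq, Polynomial.natDegree_mul hm0 hqne]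
    have h2 := m.reverse_natDegree_le
    omega
  have hq0 : q = Polynomial.C (q.coeff 0) := Polynomial.eq_C_of_natDegree_eq_zero hdegq
  have htrail : m.natTrailingDegree = 0 := by
    rw [Polynomial.natTrailingDegree_eq_zero]
    right
    rwa [Polynomial.coeff_zero_eq_eval_zero]
  have hcoeff : q.coeff 0 = m.eval 0 := by
    have hl : m.reverse.leadingCoeff = m.trailingCoeff := m.reverse_leadingCoeff
    rw [hq, hq0, Polynomial.leadingCoeff_mul, Polynomial.leadingCoeff_C,
      hmono.leadingCoeff, one_mul] at hl
    rw [hl, Polynomial.trailingCoeff, htrail, Polynomial.coeff_zero_eq_eval_zero]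
  refine ⟨heval, ?_, heqmin⟩
  rw [hq, hq0, hcoeff, mul_comm]
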